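/- arXiv:1712.02649 — 2 statements merged into one kernel-verified Lean document; each statement's English description precedes it below -/
import Mathlib

section
/- Let S have (p,δ)-structure with characteristics (κ₀, κ₁, p) for some p ∈ (1,∞) and δ ≥ 0. For symmetric A, B ∈ ℝ^{3×3}_sym with A ≠ 0 (or δ > 0) define 𝒫(A, B) := Σ_{k,l,m,n=1}^{3} ∂_{kl}S_{mn}(A) B_{kl} B_{mn}. Then there exist constants c, C > 0 depending only on the characteristics (κ₀, κ₁, p) of S such that c·|DS(A)[B]|²/φ''(|A|) ≤ 𝒫(A, B) ≤ C·|DS(A)[B]|²/φ''(|A|), where φ = φ_{p,δ} and DS(A)[B] is the directional derivative of S at A in direction B. In particular, for a smooth symmetric tensor field Q this yields 𝒫_i(Q) := ∂_i S(Q)·∂_i Q ~ |∂_i S(Q)|²/φ''(|Q|) for i = 1,2,3. -/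
noncomputable section

open Matrix

attribute [local instance] Matrix.normedAddCommGroup Matrix.normedSpace

/-- 3×3 real matrices. -/
abbrev Mat3 := Matrix (Fin 3) (Fin 3) ℝ

/-- The symmetric part `P^sym = (P + Pᵀ)/2` of a matrix. -/
def msym (P : Mat3) : Mat3 := (1 / 2 : ℝ) • (P + Pᵀ)

/-- The scalar product of tensors `A·B = Σ_{i,j} A_{ij} B_{ij}`. -/
def mdot (A B : Mat3) : ℝ := ∑ i, ∑ j, A i j * B i j

/-- The Euclidean (Frobenius) norm `|A| = √(A·A)`. -/
def mnorm (A : Mat3) : ℝ := Real.sqrt (mdot A A)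

/-- The N-function `φ_{p,δ}(t) = ∫₀ᵗ (δ+s)^{p-2} s ds`. -/
def phi (p δ t : ℝ) : ℝ := ∫ s in (0:ℝ)..t, (δ + s) ^ (p - 2) * s

/-- Its first derivative `φ'(t) = (δ+t)^{p-2} t`. -/
def phi' (p δ t : ℝ) : ℝ := (δ + t) ^ (p - 2) * t

/-- Its second derivative `φ''(t) = (p-2)(δ+t)^{p-3} t + (δ+t)^{p-2}` (for `t > 0`). -/
def phi'' (p δ t : ℝ) : ℝ := (p - 2) * (δ + t) ^ (p - 3) * t + (δ + t) ^ (p - 2)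

/-- The partial derivative `∂_{kl} S_{ij}(P)` of the `(i,j)` component of `S`
with respect to the `(k,l)` matrix entry. -/
def DS (S : Mat3 → Mat3) (P : Mat3) (k l i j : Fin 3) : ℝ :=
  fderiv ℝ S P (Matrix.single k l 1) i j

/-- A tensor field `S` has `(p,δ)`-structure with characteristics `(κ₀, κ₁, p)`. -/
structure PDelta (p δ κ₀ κ₁ : ℝ) (S : Mat3 → Mat3) : Prop where
  cont : Continuous S
  smooth : ContDiffOn ℝ 1 S {(0 : Mat3)}ᶜ
  symval : ∀ P, (S P)ᵀ = S P
  symdep : ∀ P, S P = S (msym P)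
  zero : S 0 = 0
  lower : ∀ P Q : Mat3, msym P ≠ 0 →
    κ₀ * phi'' p δ (mnorm (msym P)) * (mnorm (msym Q)) ^ 2 ≤
      ∑ i, ∑ j, ∑ k, ∑ l, DS S P k l i j * Q i j * Q k l
  upper : ∀ P : Mat3, msym P ≠ 0 → ∀ i j k l : Fin 3,
    |DS S P k l i j| ≤ κ₁ * phi'' p δ (mnorm (msym P))

/-- The tensor field `F(P) = (δ + |P^sym|)^{(p-2)/2} P^sym` associated to `S`. -/
def Fassoc (p δ : ℝ) (P : Mat3) : Mat3 :=
  (δ + mnorm (msym P)) ^ ((p - 2) / 2) • msym P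

/-- `𝒫(A,B) = Σ_{k,l,m,n} ∂_{kl}S_{mn}(A) B_{kl} B_{mn}`. -/
def Pquad (S : Mat3 → Mat3) (A B : Mat3) : ℝ :=
  ∑ k, ∑ l, ∑ m, ∑ n, DS S A k l m n * B k l * B m n

section AuxLemmas

lemma mdot_self_nonneg (X : Mat3) : 0 ≤ mdot X X :=
  Finset.sum_nonneg fun _ _ => Finset.sum_nonneg fun _ _ => mul_self_nonneg _

lemma mnorm_nonneg (X : Mat3) : 0 ≤ mnorm X := Real.sqrt_nonneg _

lemma mnorm_sq (X : Mat3) : mnorm X ^ 2 = mdot X X := Real.sq_sqrt (mdot_self_nonneg X)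

lemma mdot_zero_left (B : Mat3) : mdot 0 B = 0 := by simp [mdot]

lemma mdot_zero_right (B : Mat3) : mdot B 0 = 0 := by simp [mdot]

@[simp] lemma mnorm_zero : mnorm (0 : Mat3) = 0 := by simp [mnorm, mdot]

lemma mnorm_pos {X : Mat3} (h : X ≠ 0) : 0 < mnorm X := by
  rw [mnorm, Real.sqrt_pos]
  rcases (mdot_self_nonneg X).lt_or_eq with h1 | h1
  · exact h1
  · exfalso
    apply h
    ext i j
    by_contra hij
    have h2 : 0 < X i j * X i j := mul_self_pos.2 (by simpa using hij)
    have h3 : X i j * X i j ≤ ∑ j', X i j' * X i j' :=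
      Finset.single_le_sum (f := fun j' => X i j' * X i j')
        (fun _ _ => mul_self_nonneg _) (Finset.mem_univ j)
    have h4 : (∑ j', X i j' * X i j') ≤ mdot X X :=
      Finset.single_le_sum (f := fun i' => ∑ j', X i' j' * X i' j')
        (fun _ _ => Finset.sum_nonneg fun _ _ => mul_self_nonneg _) (Finset.mem_univ i)
    linarith

lemma mnorm_smul (t : ℝ) (X : Mat3) : mnorm (t • X) = |t| * mnorm X := by
  have h : mdot (t • X) (t • X) = t ^ 2 * mdot X X := by
    simp only [mdot, Finset.mul_sum, Matrix.smul_apply, smul_eq_mul]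
    refine Finset.sum_congr rfl fun i _ => Finset.sum_congr rfl fun j _ => by ring
  rw [mnorm, h, Real.sqrt_mul (sq_nonneg t), Real.sqrt_sq_eq_abs, mnorm]

lemma mdot_prod_sum (X Y : Mat3) : mdot X Y = ∑ p : Fin 3 × Fin 3, X p.1 p.2 * Y p.1 p.2 := by
  rw [mdot, Fintype.sum_prod_type]

lemma mdot_le_mnorm_mul (X Y : Mat3) : mdot X Y ≤ mnorm X * mnorm Y := by
  rw [mdot_prod_sum, mnorm, mnorm, mdot_prod_sum, mdot_prod_sum]
  have h := Real.sum_mul_le_sqrt_mul_sqrt (Finset.univ : Finset (Fin 3 × Fin 3))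
    (fun p => X p.1 p.2) (fun p => Y p.1 p.2)
  simpa [pow_two] using h

lemma sum_abs_le (B : Mat3) : ∑ k : Fin 3, ∑ l : Fin 3, |B k l| ≤ 3 * mnorm B := by
  have h := Real.sum_mul_le_sqrt_mul_sqrt (Finset.univ : Finset (Fin 3 × Fin 3))
    (fun p => |B p.1 p.2|) (fun _ => (1 : ℝ))
  have e1 : ∑ p : Fin 3 × Fin 3, |B p.1 p.2| * 1 = ∑ k : Fin 3, ∑ l : Fin 3, |B k l| := by
    rw [Fintype.sum_prod_type]; simp
  have e2 : ∑ p : Fin 3 × Fin 3, |B p.1 p.2| ^ 2 = mdot B B := by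
    rw [mdot_prod_sum]
    exact Finset.sum_congr rfl fun p _ => by rw [sq_abs, pow_two]
  have e3 : ∑ _p : Fin 3 × Fin 3, ((1:ℝ)) ^ 2 = 9 := by simp
  rw [e1, e2, e3] at h
  have e4 : Real.sqrt 9 = 3 := by
    rw [show (9:ℝ) = 3 ^ 2 by norm_num, Real.sqrt_sq (by norm_num : (0:ℝ) ≤ 3)]
  rw [e4] at h
  rw [mnorm]
  linarith

lemma abs_entry_le_mnorm (X : Mat3) (i j : Fin 3) : |X i j| ≤ mnorm X := by
  rw [mnorm, ← Real.sqrt_sq_eq_abs]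
  apply Real.sqrt_le_sqrt
  have h3 : X i j * X i j ≤ ∑ j', X i j' * X i j' :=
    Finset.single_le_sum (f := fun j' => X i j' * X i j')
        (fun _ _ => mul_self_nonneg _) (Finset.mem_univ j)
  have h4 : (∑ j', X i j' * X i j') ≤ mdot X X :=
    Finset.single_le_sum (f := fun i' => ∑ j', X i' j' * X i' j')
      (fun _ _ => Finset.sum_nonneg fun _ _ => mul_self_nonneg _) (Finset.mem_univ i)
  rw [pow_two]; linarith

lemma mnorm_le_of_entries {X : Mat3} {M : ℝ} (hM : 0 ≤ M) (h : ∀ i j, |X i j| ≤ M) :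
    mnorm X ≤ 3 * M := by
  have h1 : mdot X X ≤ 9 * M ^ 2 := by
    have key : ∀ i j : Fin 3, X i j * X i j ≤ M ^ 2 := fun i j => by
      have := h i j
      nlinarith [abs_nonneg (X i j), sq_abs (X i j)]
    calc mdot X X ≤ ∑ _i : Fin 3, ∑ _j : Fin 3, M ^ 2 :=
          Finset.sum_le_sum fun i _ => Finset.sum_le_sum fun j _ => key i j
      _ = 9 * M ^ 2 := by simp [Fin.sum_univ_three]; ring
  calc mnorm X = Real.sqrt (mdot X X) := rfl
    _ ≤ Real.sqrt (9 * M ^ 2) := Real.sqrt_le_sqrt h1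
    _ = 3 * M := by
        rw [show (9:ℝ) * M ^ 2 = (3 * M) ^ 2 by ring, Real.sqrt_sq (by positivity)]

lemma mdot_neg_right (X C : Mat3) : mdot X (-C) = -(mdot X C) := by
  simp [mdot, mul_neg, Finset.sum_neg_distrib]

lemma mdot_stdBasis (X : Mat3) (i j : Fin 3) : mdot X (Matrix.single i j 1) = X i j := by
  fin_cases i <;> fin_cases j <;>
    simp [mdot, Matrix.single, Fin.sum_univ_three]

lemma msym_eq {X : Mat3} (h : Xᵀ = X) : msym X = X := by
  rw [msym, h]
  ext i j
  simp [Matrix.add_apply, Matrix.smul_apply, smul_eq_mul]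
  ring

lemma phi''_eq (p δ t : ℝ) (h : 0 < δ + t) :
    phi'' p δ t = (δ + t) ^ (p - 3) * ((p - 1) * t + δ) := by
  rw [phi'', show p - 2 = (p - 3) + 1 by ring, Real.rpow_add h, Real.rpow_one]
  ring

lemma phi''_pos {p δ t : ℝ} (hp : 1 < p) (hδ : 0 ≤ δ) (ht : 0 ≤ t) (h : 0 < δ ∨ 0 < t) :
    0 < phi'' p δ t := by
  have hδt : 0 < δ + t := by rcases h with h | h <;> linarith
  rw [phi''_eq p δ t hδt]
  have h1 : 0 < (δ + t) ^ (p - 3) := Real.rpow_pos_of_pos hδt _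
  have h2 : 0 < (p - 1) * t + δ := by
    rcases h with h | h
    · nlinarith
    · nlinarith
  exact mul_pos h1 h2

lemma phi''_continuousAt {p δ : ℝ} (hδ : 0 < δ) : ContinuousAt (phi'' p δ) 0 := by
  have h1 : ContinuousAt (fun s : ℝ => δ + s) 0 := by fun_prop
  have hne : (fun s : ℝ => δ + s) 0 ≠ 0 := by simpa using hδ.ne'
  have h2 : ContinuousAt (fun s : ℝ => (δ + s) ^ (p - 3)) 0 := h1.rpow_const (Or.inl hne)
  have h3 : ContinuousAt (fun s : ℝ => (δ + s) ^ (p - 2)) 0 := h1.rpow_const (Or.inl hne)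
  have h4 : ContinuousAt (fun s : ℝ => (p - 2) * (δ + s) ^ (p - 3) * s + (δ + s) ^ (p - 2)) 0 :=
    ((continuousAt_const.mul h2).mul continuousAt_id).add h3
  exact h4

lemma clm_entry (f : Mat3 →L[ℝ] Mat3) (Q : Mat3) (i j : Fin 3) :
    f Q i j = ∑ k, ∑ l, Q k l * f (Matrix.single k l 1) i j := by
  have hQ : ∀ k l : Fin 3, Matrix.single k l (Q k l) = Q k l • Matrix.single k l (1:ℝ) := by
    intro k l
    rw [smul_single, smul_eq_mul, mul_one]
  conv_lhs => rw [matrix_eq_sum_single Q]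
  simp only [map_sum, hQ, _root_.map_smul]
  simp only [Matrix.sum_apply, Matrix.smul_apply, smul_eq_mul]

lemma quad_eq_mdot (f : Mat3 →L[ℝ] Mat3) (Q : Mat3) :
    ∑ i, ∑ j, ∑ k, ∑ l, f (Matrix.single k l 1) i j * Q i j * Q k l = mdot (f Q) Q := by
  simp only [mdot, clm_entry f Q, Finset.sum_mul, Fin.sum_univ_three]
  ring

lemma quad_eq_mdot' (f : Mat3 →L[ℝ] Mat3) (Q : Mat3) :
    ∑ k, ∑ l, ∑ m, ∑ n, f (Matrix.single k l 1) m n * Q k l * Q m n = mdot (f Q) Q := by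
  simp only [mdot, clm_entry f Q, Finset.sum_mul, Fin.sum_univ_three]
  ring

lemma clm_entry_bound {f : Mat3 →L[ℝ] Mat3} {Q : Mat3} {K : ℝ} (hK : 0 ≤ K)
    (h : ∀ i j k l : Fin 3, |f (Matrix.single k l 1) i j| ≤ K) (i j : Fin 3) :
    |f Q i j| ≤ 3 * K * mnorm Q := by
  rw [clm_entry]
  have h1 : |∑ k, ∑ l, Q k l * f (Matrix.single k l 1) i j| ≤ ∑ k, ∑ l, |Q k l| * K := by
    refine (Finset.abs_sum_le_sum_abs _ _).trans (Finset.sum_le_sum fun k _ => ?_)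
    refine (Finset.abs_sum_le_sum_abs _ _).trans (Finset.sum_le_sum fun l _ => ?_)
    rw [abs_mul]
    exact mul_le_mul_of_nonneg_left (h i j k l) (abs_nonneg _)
  have h2 : ∑ k, ∑ l, |Q k l| * K = (∑ k : Fin 3, ∑ l : Fin 3, |Q k l|) * K := by
    rw [Finset.sum_mul]
    exact Finset.sum_congr rfl fun _ _ => (Finset.sum_mul _ _ _).symm
  have h3 : (∑ k : Fin 3, ∑ l : Fin 3, |Q k l|) * K ≤ (3 * mnorm Q) * K :=
    mul_le_mul_of_nonneg_right (sum_abs_le Q) hK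
  calc |∑ k, ∑ l, Q k l * f (Matrix.single k l 1) i j| ≤ ∑ k, ∑ l, |Q k l| * K := h1
    _ = (∑ k : Fin 3, ∑ l : Fin 3, |Q k l|) * K := h2
    _ ≤ (3 * mnorm Q) * K := h3
    _ = 3 * K * mnorm Q := by ring

def mdotCLM (B : Mat3) : Mat3 →L[ℝ] ℝ :=
  LinearMap.toContinuousLinearMap
    { toFun := fun M => mdot M B
      map_add' := fun M N => by
        simp [mdot, Matrix.add_apply, add_mul, Finset.sum_add_distrib]
      map_smul' := fun c M => by
        simp only [mdot, Matrix.smul_apply, smul_eq_mul, RingHom.id_apply, Finset.mul_sum]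
        exact Finset.sum_congr rfl fun i _ => Finset.sum_congr rfl fun j _ => by ring }

@[simp] lemma mdotCLM_apply (B M : Mat3) : mdotCLM B M = mdot M B := rfl

lemma hasDerivAt_path (S : Mat3 → Mat3) (B C : Mat3) (t : ℝ)
    (h : DifferentiableAt ℝ S (t • B)) :
    HasDerivAt (fun s : ℝ => mdot (S (s • B)) C) (mdot (fderiv ℝ S (t • B) B) C) t := by
  have h1 : HasDerivAt (fun s : ℝ => s • B) B t := by
    have := (hasDerivAt_id t).smul_const B; rw [one_smul] at this; exact this
  have h2 : HasDerivAt (fun s : ℝ => S (s • B)) (fderiv ℝ S (t • B) B) t :=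
    h.hasFDerivAt.comp_hasDerivAt t h1
  have h3 := (mdotCLM C).hasFDerivAt.comp_hasDerivAt t h2
  exact h3

lemma le_deriv_of_slope {g g' : ℝ → ℝ} {d m t₀ : ℝ} (ht₀ : 0 < t₀)
    (hg0 : g 0 = 0) (hc : ContinuousOn g (Set.Icc 0 t₀))
    (hder : ∀ t ∈ Set.Ioo (0:ℝ) t₀, HasDerivAt g (g' t) t)
    (hm : ∀ t ∈ Set.Ioo (0:ℝ) t₀, m ≤ g' t)
    (hd : HasDerivAt g d 0) : m ≤ d := by
  have key : ∀ t ∈ Set.Ioo (0:ℝ) t₀, m * t ≤ g t := by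
    intro t ht
    have hmono : MonotoneOn (fun t => g t - m * t) (Set.Icc 0 t₀) := by
      apply monotoneOn_of_deriv_nonneg (convex_Icc 0 t₀)
      · exact hc.sub (Continuous.continuousOn (by continuity))
      · intro x hx
        rw [interior_Icc] at hx
        exact ((hder x hx).sub ((hasDerivAt_id x).const_mul m)).differentiableAt.differentiableWithinAt
      · intro x hx
        rw [interior_Icc] at hx
        have hdx : HasDerivAt (fun t => g t - m * t) (g' x - m * 1) x :=
          (hder x hx).sub ((hasDerivAt_id x).const_mul m)
        rw [hdx.deriv]
        have := hm x hx
        linarith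
    have h0 : (0:ℝ) ∈ Set.Icc (0:ℝ) t₀ := ⟨le_refl _, ht₀.le⟩
    have htm : t ∈ Set.Icc (0:ℝ) t₀ := ⟨ht.1.le, ht.2.le⟩
    have := hmono h0 htm ht.1.le
    simp only [hg0, mul_zero, sub_zero, zero_sub] at this
    linarith
  have hslope : Filter.Tendsto (fun t => g t / t) (nhdsWithin 0 (Set.Ioi 0)) (nhds d) := by
    have h1 := hasDerivAt_iff_tendsto_slope.mp hd
    have h2 : Filter.Tendsto (slope g 0) (nhdsWithin 0 (Set.Ioi 0)) (nhds d) :=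
      h1.mono_left (nhdsWithin_mono 0 (fun x hx => ne_of_gt hx))
    apply h2.congr'
    filter_upwards [self_mem_nhdsWithin] with t (ht : t ∈ Set.Ioi (0:ℝ))
    rw [slope_def_field, hg0, sub_zero, sub_zero]
  refine ge_of_tendsto hslope ?_
  filter_upwards [Ioo_mem_nhdsGT_of_mem (Set.mem_Ico.mpr ⟨le_refl (0:ℝ), ht₀⟩)] with t ht
  exact (le_div_iff₀ ht.1).mpr (key t ht)

lemma lower_mdot {p δ κ₀ κ₁ : ℝ} {S : Mat3 → Mat3} (hS : PDelta p δ κ₀ κ₁ S)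
    (P Q : Mat3) (hP : msym P ≠ 0) :
    κ₀ * phi'' p δ (mnorm (msym P)) * (mnorm (msym Q)) ^ 2 ≤ mdot (fderiv ℝ S P Q) Q := by
  have h := hS.lower P Q hP
  rwa [show (∑ i, ∑ j, ∑ k, ∑ l, DS S P k l i j * Q i j * Q k l)
      = mdot (fderiv ℝ S P Q) Q from by
    simp only [DS]; exact quad_eq_mdot (fderiv ℝ S P) Q] at h

lemma Pquad_eq_mdot (S : Mat3 → Mat3) (A B : Mat3) :
    Pquad S A B = mdot (fderiv ℝ S A B) B := by
  rw [Pquad]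
  simp only [DS]
  exact quad_eq_mdot' (fderiv ℝ S A) B

lemma upper_entry {p δ κ₀ κ₁ : ℝ} {S : Mat3 → Mat3} (hS : PDelta p δ κ₀ κ₁ S)
    (P Q : Mat3) (hκ₁ : 0 ≤ κ₁ * phi'' p δ (mnorm (msym P))) (hP : msym P ≠ 0) (i j : Fin 3) :
    |fderiv ℝ S P Q i j| ≤ 3 * (κ₁ * phi'' p δ (mnorm (msym P))) * mnorm Q := by
  apply clm_entry_bound hκ₁ _ i j
  intro i' j' k l
  have h := hS.upper P hP i' j' k l
  simpa only [DS] using h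

end AuxLemmas

set_option maxHeartbeats 1000000 in
/-- For `S` with `(p,δ)`-structure, and symmetric `A, B` with `δ > 0` or `A ≠ 0`:
`𝒫(A,B) ∼ |DS(A)[B]|²/φ''(|A|)`, with constants depending only on the characteristics
`(κ₀, κ₁, p)` of `S`. Here `DS(A)[B] = (fderiv ℝ S A) B`. -/
theorem Pquad_equiv_DS (p κ₀ κ₁ : ℝ) (hp : 1 < p) (hκ₀ : 0 < κ₀) (hκ₁ : 0 < κ₁) :
    ∃ c C : ℝ, 0 < c ∧ 0 < C ∧ ∀ δ : ℝ, 0 ≤ δ → ∀ S : Mat3 → Mat3,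
      PDelta p δ κ₀ κ₁ S →
      ∀ A B : Mat3, Aᵀ = A → Bᵀ = B → (0 < δ ∨ A ≠ 0) →
        c * ((mnorm (fderiv ℝ S A B)) ^ 2 / phi'' p δ (mnorm A)) ≤ Pquad S A B ∧
        Pquad S A B ≤ C * ((mnorm (fderiv ℝ S A B)) ^ 2 / phi'' p δ (mnorm A)) := by
  refine ⟨κ₀ / (648 * κ₁ ^ 2), 2 / κ₀, by positivity, by positivity, ?_⟩
  intro δ hδ S hS A B hA hB hcase
  have hPq : Pquad S A B = mdot (fderiv ℝ S A B) B := Pquad_eq_mdot S A B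
  by_cases hB0 : B = 0
  · subst hB0
    rw [hPq, map_zero, mdot_zero_left, mnorm_zero]
    norm_num
  have hnB : 0 < mnorm B := mnorm_pos hB0
  have hmsB : msym B = B := msym_eq hB
  set nf := mnorm (fderiv ℝ S A B) with hnf
  have hnf0 : 0 ≤ nf := mnorm_nonneg _
  have hCS : mdot (fderiv ℝ S A B) B ≤ nf * mnorm B := mdot_le_mnorm_mul _ _
  by_cases hA0 : A = 0
  case neg =>
    -- main case : A ≠ 0
    have hmsA : msym A = A := msym_eq hA
    have hφ : 0 < phi'' p δ (mnorm A) :=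
      phi''_pos hp hδ (mnorm_nonneg A) (Or.inr (mnorm_pos hA0))
    have hmsA0 : msym A ≠ 0 := by rw [hmsA]; exact hA0
    have h1 : κ₀ * phi'' p δ (mnorm A) * mnorm B ^ 2 ≤ mdot (fderiv ℝ S A B) B := by
      have := lower_mdot hS A B hmsA0
      rwa [hmsA, hmsB] at this
    have hub : ∀ i j, |fderiv ℝ S A B i j| ≤ 3 * (κ₁ * phi'' p δ (mnorm A)) * mnorm B := by
      intro i j
      have := upper_entry hS A B (by rw [hmsA]; positivity) hmsA0 i j
      rwa [hmsA] at this
    have h2 : nf ≤ 3 * (3 * (κ₁ * phi'' p δ (mnorm A)) * mnorm B) :=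
      mnorm_le_of_entries (by positivity) hub
    have hP0 : 0 ≤ mdot (fderiv ℝ S A B) B := le_trans (by positivity) h1
    rw [hPq]
    constructor
    · rw [show κ₀ / (648 * κ₁ ^ 2) * (nf ^ 2 / phi'' p δ (mnorm A))
          = (κ₀ * nf ^ 2) / (648 * κ₁ ^ 2 * phi'' p δ (mnorm A)) by ring,
        div_le_iff₀ (by positivity)]
      have hsq : nf ^ 2 ≤ 81 * κ₁ ^ 2 * phi'' p δ (mnorm A) ^ 2 * mnorm B ^ 2 := by
        nlinarith [mnorm_nonneg B, hφ.le, hκ₁.le]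
      nlinarith [mul_le_mul_of_nonneg_left h1
          (show (0:ℝ) ≤ 81 * κ₁ ^ 2 * phi'' p δ (mnorm A) by positivity),
        mul_le_mul_of_nonneg_left hsq hκ₀.le,
        mul_nonneg hφ.le hP0, sq_nonneg κ₁, mul_pos hφ hφ]
    · rw [show 2 / κ₀ * (nf ^ 2 / phi'' p δ (mnorm A))
          = (2 * nf ^ 2) / (κ₀ * phi'' p δ (mnorm A)) by ring,
        le_div_iff₀ (by positivity)]
      have h3 : κ₀ * phi'' p δ (mnorm A) * mnorm B ≤ nf := by
        have h4 : (κ₀ * phi'' p δ (mnorm A) * mnorm B) * mnorm B ≤ nf * mnorm B := by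
          nlinarith [h1.trans hCS]
        exact le_of_mul_le_mul_right h4 hnB
      nlinarith [mul_le_mul_of_nonneg_right hCS (by positivity : (0:ℝ) ≤ κ₀ * phi'' p δ (mnorm A)),
        mul_le_mul_of_nonneg_left h3 hnf0, sq_nonneg nf]
  case pos =>
    subst hA0
    have hδ0 : 0 < δ := hcase.resolve_right (fun h => h rfl)
    have hψ0 : 0 < phi'' p δ 0 := phi''_pos hp hδ le_rfl (Or.inl hδ0)
    rw [mnorm_zero]
    by_cases hd : DifferentiableAt ℝ S 0
    case neg =>
      have hz : fderiv ℝ S 0 = 0 := fderiv_zero_of_not_differentiableAt hd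
      rw [hPq, hnf, hz]
      simp only [ContinuousLinearMap.zero_apply, mdot_zero_left, mnorm_zero]
      norm_num
    case pos =>
      set ψ0 := phi'' p δ 0 with hψ0def
      obtain ⟨r, hr, hball⟩ :=
        Metric.continuousAt_iff.mp (phi''_continuousAt (p := p) hδ0) (ψ0 / 2) (by positivity)
      set t₀ := r / mnorm B with ht₀def
      have ht₀ : 0 < t₀ := div_pos hr hnB
      have hpsi : ∀ t ∈ Set.Ioo (0:ℝ) t₀,
          ψ0 / 2 ≤ phi'' p δ (t * mnorm B) ∧ phi'' p δ (t * mnorm B) ≤ 2 * ψ0 := by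
        intro t ht
        have hdist : dist (t * mnorm B) 0 < r := by
          rw [Real.dist_eq, sub_zero,
            abs_of_nonneg (mul_nonneg ht.1.le hnB.le)]
          calc t * mnorm B < t₀ * mnorm B := mul_lt_mul_of_pos_right ht.2 hnB
            _ = r := by rw [ht₀def]; exact div_mul_cancel₀ _ hnB.ne'
        have h := hball hdist
        rw [Real.dist_eq] at h
        have h' := abs_lt.mp h
        exact ⟨by linarith [h'.1], by linarith [h'.2, hψ0]⟩
      have hdiffAt : ∀ t ∈ Set.Ioo (0:ℝ) t₀, DifferentiableAt ℝ S (t • B) := by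
        intro t ht
        have hne : t • B ≠ 0 := smul_ne_zero (ne_of_gt ht.1) hB0
        exact (hS.smooth.contDiffAt
          ((isOpen_compl_singleton).mem_nhds hne)).differentiableAt one_ne_zero
      have hmsTB : ∀ t : ℝ, msym (t • B) = t • B := fun t =>
        msym_eq (by rw [Matrix.transpose_smul, hB])
      have hmsTB0 : ∀ t : ℝ, 0 < t → msym (t • B) ≠ 0 := fun t ht => by
        rw [hmsTB t]; exact smul_ne_zero (ne_of_gt ht) hB0
      have hnTB : ∀ t : ℝ, 0 < t → mnorm (msym (t • B)) = t * mnorm B := fun t ht => by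
        rw [hmsTB t, mnorm_smul, abs_of_pos ht]
      have hgc : Continuous (fun s : ℝ => S (s • B)) :=
        hS.cont.comp (continuous_id.smul continuous_const)
      have hd' : DifferentiableAt ℝ S ((0:ℝ) • B) := by rwa [zero_smul]
      have hlow : κ₀ * (ψ0 / 2) * mnorm B ^ 2 ≤ mdot (fderiv ℝ S 0 B) B := by
        have hder0 : HasDerivAt (fun s : ℝ => mdot (S (s • B)) B)
            (mdot (fderiv ℝ S 0 B) B) 0 := by
          simpa [zero_smul] using hasDerivAt_path S B B 0 hd'
        refine le_deriv_of_slope (g := fun s : ℝ => mdot (S (s • B)) B)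
          (g' := fun t => mdot (fderiv ℝ S (t • B) B) B) ht₀ ?_ ?_ ?_ ?_ hder0
        · simp [zero_smul, hS.zero, mdot_zero_left]
        · exact ((mdotCLM B).continuous.comp hgc).continuousOn
        · intro t ht; exact hasDerivAt_path S B B t (hdiffAt t ht)
        · intro t ht
          have hl := lower_mdot hS (t • B) B (hmsTB0 t ht.1)
          rw [hnTB t ht.1, hmsB] at hl
          have hpl := (hpsi t ht).1
          nlinarith [mul_le_mul_of_nonneg_left hpl
            (mul_nonneg hκ₀.le (sq_nonneg (mnorm B)))]
      have hM : (0:ℝ) ≤ 6 * κ₁ * ψ0 * mnorm B := by positivity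
      have hentry : ∀ t ∈ Set.Ioo (0:ℝ) t₀, ∀ i j : Fin 3,
          |fderiv ℝ S (t • B) B i j| ≤ 6 * κ₁ * ψ0 * mnorm B := by
        intro t ht i j
        have hφt : 0 ≤ phi'' p δ (t * mnorm B) :=
          le_trans (by positivity) (hpsi t ht).1
        have h1 := upper_entry hS (t • B) B
          (by rw [hnTB t ht.1]; exact mul_nonneg hκ₁.le hφt) (hmsTB0 t ht.1) i j
        rw [hnTB t ht.1] at h1
        have h2 := (hpsi t ht).2
        calc |fderiv ℝ S (t • B) B i j|
            ≤ 3 * (κ₁ * phi'' p δ (t * mnorm B)) * mnorm B := h1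
          _ ≤ 6 * κ₁ * ψ0 * mnorm B := by nlinarith [hnB.le, hκ₁.le]
      have hEntry0 : ∀ i j : Fin 3, |fderiv ℝ S 0 B i j| ≤ 6 * κ₁ * ψ0 * mnorm B := by
        intro i j
        have hlo : -(6 * κ₁ * ψ0 * mnorm B)
            ≤ mdot (fderiv ℝ S 0 B) (Matrix.single i j 1) := by
          have hder0 : HasDerivAt (fun s : ℝ => mdot (S (s • B)) (Matrix.single i j 1))
              (mdot (fderiv ℝ S 0 B) (Matrix.single i j 1)) 0 := by
            simpa [zero_smul] using hasDerivAt_path S B (Matrix.single i j 1) 0 hd'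
          refine le_deriv_of_slope (g := fun s : ℝ => mdot (S (s • B)) (Matrix.single i j 1))
            (g' := fun t => mdot (fderiv ℝ S (t • B) B) (Matrix.single i j 1))
            ht₀ ?_ ?_ ?_ ?_ hder0
          · simp [zero_smul, hS.zero, mdot_zero_left]
          · exact ((mdotCLM (Matrix.single i j 1)).continuous.comp hgc).continuousOn
          · intro t ht; exact hasDerivAt_path S B _ t (hdiffAt t ht)
          · intro t ht
            simp only [mdot_stdBasis]
            exact (abs_le.mp (hentry t ht i j)).1
        have hhi : -(6 * κ₁ * ψ0 * mnorm B)
            ≤ mdot (fderiv ℝ S 0 B) (-(Matrix.single i j 1)) := by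
          have hder0 : HasDerivAt (fun s : ℝ => mdot (S (s • B)) (-(Matrix.single i j 1)))
              (mdot (fderiv ℝ S 0 B) (-(Matrix.single i j 1))) 0 := by
            simpa [zero_smul] using hasDerivAt_path S B (-(Matrix.single i j 1)) 0 hd'
          refine le_deriv_of_slope (g := fun s : ℝ => mdot (S (s • B)) (-(Matrix.single i j 1)))
            (g' := fun t => mdot (fderiv ℝ S (t • B) B) (-(Matrix.single i j 1)))
            ht₀ ?_ ?_ ?_ ?_ hder0
          · simp [zero_smul, hS.zero, mdot_zero_left]
          · exact ((mdotCLM (-(Matrix.single i j 1))).continuous.comp hgc).continuousOn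
          · intro t ht; exact hasDerivAt_path S B _ t (hdiffAt t ht)
          · intro t ht
            simp only [mdot_neg_right, mdot_stdBasis]
            have := (abs_le.mp (hentry t ht i j)).2
            linarith
        rw [mdot_stdBasis] at hlo
        rw [mdot_neg_right, mdot_stdBasis] at hhi
        exact abs_le.mpr ⟨hlo, by linarith⟩
      have h2 : nf ≤ 3 * (6 * κ₁ * ψ0 * mnorm B) := mnorm_le_of_entries hM hEntry0
      have hP0 : 0 ≤ mdot (fderiv ℝ S 0 B) B := le_trans (by positivity) hlow
      rw [hPq]
      constructor
      · rw [show κ₀ / (648 * κ₁ ^ 2) * (nf ^ 2 / ψ0)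
            = (κ₀ * nf ^ 2) / (648 * κ₁ ^ 2 * ψ0) by ring,
          div_le_iff₀ (by positivity)]
        have hsq : nf ^ 2 ≤ 324 * κ₁ ^ 2 * ψ0 ^ 2 * mnorm B ^ 2 := by
          nlinarith [hnf0, hM]
        nlinarith [mul_le_mul_of_nonneg_left hlow
            (show (0:ℝ) ≤ 648 * κ₁ ^ 2 * ψ0 by positivity),
          mul_le_mul_of_nonneg_left hsq hκ₀.le, mul_nonneg hψ0.le hP0]
      · rw [show 2 / κ₀ * (nf ^ 2 / ψ0) = (2 * nf ^ 2) / (κ₀ * ψ0) by ring,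
          le_div_iff₀ (by positivity)]
        have h3 : κ₀ * (ψ0 / 2) * mnorm B ≤ nf := by
          have h4 : (κ₀ * (ψ0 / 2) * mnorm B) * mnorm B ≤ nf * mnorm B := by
            nlinarith [hlow.trans hCS]
          exact le_of_mul_le_mul_right h4 hnB
        nlinarith [mul_le_mul_of_nonneg_right hCS
            (by positivity : (0:ℝ) ≤ κ₀ * ψ0),
          mul_le_mul_of_nonneg_left h3 hnf0, sq_nonneg nf]
end
end

section
/- Let a : ℝ² → ℝ be continuously differentiable and let α ∈ {1,2}. Define the tangential derivative ∂_τ g := ∂_α g + (∂_α a)·∂₃ g for functions g on ℝ³ (where ∂_α a is evaluated at x' and ∂_α, ∂₃ are partial derivatives in ℝ³). Then for all continuously differentiable f, g : ℝ³ → ℝ such that the product f·g has compact support: ∫_{ℝ³} f·(∂_τ g) dx = −∫_{ℝ³} (∂_τ f)·g dx. -/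
noncomputable section

open MeasureTheory

/-- The tangential derivative `∂_τ g = ∂_α g + (∂_α a)·∂₃ g` adapted to the graph
`x₃ = a(x')`, for functions on `ℝ³ = ℝ² × ℝ`. -/
def tangDeriv (a : (Fin 2 → ℝ) → ℝ) (α : Fin 2)
    (g : (Fin 2 → ℝ) × ℝ → ℝ) (x : (Fin 2 → ℝ) × ℝ) : ℝ :=
  fderiv ℝ g x ((Pi.single α 1 : Fin 2 → ℝ), (0 : ℝ)) +
    fderiv ℝ a x.1 (Pi.single α 1) * fderiv ℝ g x ((0 : Fin 2 → ℝ), (1 : ℝ))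

/-- 1D: the integral of the derivative of a compactly supported `C¹` function vanishes. -/
lemma integral_deriv_eq_zero_of_hasCompactSupport (φ : ℝ → ℝ) (hφ : ContDiff ℝ 1 φ)
    (hs : HasCompactSupport φ) : ∫ t, deriv φ t = 0 := by
  have hcont : Continuous (deriv φ) := hφ.continuous_deriv le_rfl
  have hint : Integrable (deriv φ) := hcont.integrable_of_hasCompactSupport hs.deriv
  have h1 := hs.integral_Iic_deriv_eq hφ 0
  have h2 := hs.integral_Ioi_deriv_eq hφ 0
  have := intervalIntegral.integral_Iic_add_Ioi (b := (0:ℝ))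
    hint.integrableOn hint.integrableOn
  rw [h1, h2] at this
  linarith

/-- Key lemma: the integral of the tangential derivative of a compactly supported
`C¹` function vanishes (the associated vector field is divergence-free). -/
lemma integral_tangDeriv_eq_zero (a : (Fin 2 → ℝ) → ℝ) (ha : ContDiff ℝ 1 a) (α : Fin 2)
    (h : (Fin 2 → ℝ) × ℝ → ℝ) (hh : ContDiff ℝ 1 h) (hs : HasCompactSupport h) :
    ∫ x, tangDeriv a α h x = 0 := by
  have hdiff : Differentiable ℝ h := hh.differentiable one_ne_zero
  have hvol : (volume : Measure ((Fin 2 → ℝ) × ℝ))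
      = (volume : Measure (Fin 2 → ℝ)).prod volume := Measure.volume_eq_prod _ _
  set v1 : (Fin 2 → ℝ) × ℝ := ((Pi.single α 1 : Fin 2 → ℝ), (0 : ℝ)) with hv1
  set v3 : (Fin 2 → ℝ) × ℝ := ((0 : Fin 2 → ℝ), (1 : ℝ)) with hv3
  -- continuity/compact support of the two pieces
  have hcont1 : Continuous fun x => fderiv ℝ h x v1 :=
    (hh.continuous_fderiv one_ne_zero).clm_apply continuous_const
  have hcont3 : Continuous fun x => fderiv ℝ h x v3 :=
    (hh.continuous_fderiv one_ne_zero).clm_apply continuous_const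
  have hsupp1 : HasCompactSupport fun x => fderiv ℝ h x v1 :=
    hs.fderiv_apply (𝕜 := ℝ) v1
  have hsupp3 : HasCompactSupport fun x => fderiv ℝ h x v3 :=
    hs.fderiv_apply (𝕜 := ℝ) v3
  have hcontc : Continuous fun y : Fin 2 → ℝ => fderiv ℝ a y (Pi.single α 1) :=
    (ha.continuous_fderiv one_ne_zero).clm_apply continuous_const
  have hcontF : Continuous fun x : (Fin 2 → ℝ) × ℝ =>
      fderiv ℝ a x.1 (Pi.single α 1) * fderiv ℝ h x v3 :=
    (hcontc.comp continuous_fst).mul hcont3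
  have hsuppF : HasCompactSupport fun x : (Fin 2 → ℝ) × ℝ =>
      fderiv ℝ a x.1 (Pi.single α 1) * fderiv ℝ h x v3 := hsupp3.mul_left
  have hint1 : Integrable fun x => fderiv ℝ h x v1 :=
    hcont1.integrable_of_hasCompactSupport hsupp1
  have hintF : Integrable fun x : (Fin 2 → ℝ) × ℝ =>
      fderiv ℝ a x.1 (Pi.single α 1) * fderiv ℝ h x v3 :=
    hcontF.integrable_of_hasCompactSupport hsuppF
  -- first term
  have T1 : ∫ x, fderiv ℝ h x v1 = 0 := by
    obtain ⟨C, hC⟩ := ContDiff.lipschitzWith_of_hasCompactSupport hs hh one_ne_zero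
    have E := LipschitzWith.integral_lineDeriv_mul_eq
      (μ := (volume : Measure (Fin 2 → ℝ)).prod volume)
      (LipschitzWith.const (b := (1:ℝ))) hC hs (-v1)
    have L0 : ∀ x : (Fin 2 → ℝ) × ℝ, lineDeriv ℝ (fun _ => (1:ℝ)) x (-v1) = 0 := by
      intro x; simp [lineDeriv]
    have L1 : ∀ x : (Fin 2 → ℝ) × ℝ, lineDeriv ℝ h x (- -v1) = fderiv ℝ h x v1 := by
      intro x; rw [neg_neg]; exact (hdiff x).lineDeriv_eq_fderiv
    simp_rw [L0, L1, zero_mul, integral_zero, mul_one] at E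
    rw [hvol]
    exact E.symm
  -- second term
  have T3 : ∫ x : (Fin 2 → ℝ) × ℝ, fderiv ℝ a x.1 (Pi.single α 1) * fderiv ℝ h x v3 = 0 := by
    rw [hvol] at hintF ⊢
    rw [MeasureTheory.integral_prod _ hintF]
    have inner : ∀ x' : Fin 2 → ℝ,
        (∫ t : ℝ, fderiv ℝ a x' (Pi.single α 1) * fderiv ℝ h (x', t) v3) = 0 := by
      intro x'
      have hD : ∀ t : ℝ, HasDerivAt (fun s => h (x', s)) (fderiv ℝ h (x', t) v3) t := by
        intro t
        exact (hdiff (x', t)).hasFDerivAt.comp_hasDerivAt t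
          ((hasDerivAt_const t x').prodMk (hasDerivAt_id t))
      have hφc : ContDiff ℝ 1 fun s => h (x', s) :=
        hh.comp (contDiff_const.prodMk contDiff_id)
      have hφs : HasCompactSupport fun s => h (x', s) := by
        apply HasCompactSupport.intro (hs.image continuous_snd)
        intro t ht
        by_contra hne
        exact ht ⟨(x', t), subset_tsupport _ hne, rfl⟩
      have : (∫ t : ℝ, fderiv ℝ h (x', t) v3) = 0 := by
        have := integral_deriv_eq_zero_of_hasCompactSupport _ hφc hφs
        rw [← this]
        congr 1
        funext t
        exact ((hD t).deriv).symm
      rw [integral_const_mul, this, mul_zero]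
    rw [integral_congr_ae (Filter.Eventually.of_forall inner), integral_zero]
  have : (∫ x, tangDeriv a α h x)
      = (∫ x, fderiv ℝ h x v1) + ∫ x : (Fin 2 → ℝ) × ℝ,
        fderiv ℝ a x.1 (Pi.single α 1) * fderiv ℝ h x v3 := by
    rw [← integral_add hint1 hintF]
    rfl
  rw [this, T1, T3, add_zero]

/-- If `f·g` is compactly supported then `f · (tangDeriv g)` vanishes outside
`tsupport (f·g)`. -/
lemma mul_tangDeriv_eq_zero_of_nmem_tsupport (a : (Fin 2 → ℝ) → ℝ) (α : Fin 2)
    (f g : (Fin 2 → ℝ) × ℝ → ℝ) (hf : Continuous f)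
    (x : (Fin 2 → ℝ) × ℝ) (hx : x ∉ tsupport fun x => f x * g x) :
    f x * tangDeriv a α g x = 0 := by
  rcases eq_or_ne (f x) 0 with h0 | h0
  · rw [h0, zero_mul]
  · have hev : ∀ᶠ y in nhds x, g y = 0 := by
      have hmem : (tsupport fun x => f x * g x)ᶜ ∈ nhds x :=
        (isClosed_tsupport _).isOpen_compl.mem_nhds hx
      have hfne : ∀ᶠ y in nhds x, f y ≠ 0 := (hf.continuousAt).eventually_ne h0
      filter_upwards [hmem, hfne] with y hy hfy
      have hzero : f y * g y = 0 := by
        by_contra hne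
        exact hy (subset_tsupport _ hne)
      exact (mul_eq_zero.mp hzero).resolve_left hfy
    have hg0 : fderiv ℝ g x = 0 := by
      have h1 : fderiv ℝ g x = fderiv ℝ (fun _ => (0:ℝ)) x :=
        Filter.EventuallyEq.fderiv_eq hev
      rw [h1, fderiv_fun_const]
      rfl
    simp [tangDeriv, hg0]

/-- `tangDeriv` is continuous for `C¹` data. -/
lemma continuous_tangDeriv (a : (Fin 2 → ℝ) → ℝ) (ha : ContDiff ℝ 1 a) (α : Fin 2)
    (g : (Fin 2 → ℝ) × ℝ → ℝ) (hg : ContDiff ℝ 1 g) :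
    Continuous (tangDeriv a α g) := by
  unfold tangDeriv
  exact ((hg.continuous_fderiv one_ne_zero).clm_apply continuous_const).add
    ((((ha.continuous_fderiv one_ne_zero).clm_apply continuous_const).comp continuous_fst).mul
      ((hg.continuous_fderiv one_ne_zero).clm_apply continuous_const))

/-- Integration by parts for tangential derivatives: for `a` of class `C¹` and
`C¹` functions `f, g` whose product has compact support,
`∫ f ∂_τ g dx = −∫ (∂_τ f) g dx`. -/
theorem tangDeriv_integration_by_parts
    (a : (Fin 2 → ℝ) → ℝ) (ha : ContDiff ℝ 1 a) (α : Fin 2)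
    (f g : (Fin 2 → ℝ) × ℝ → ℝ)
    (hf : ContDiff ℝ 1 f) (hg : ContDiff ℝ 1 g)
    (hsupp : HasCompactSupport fun x => f x * g x) :
    ∫ x, f x * tangDeriv a α g x = -∫ x, tangDeriv a α f x * g x := by
  have hsupp' : HasCompactSupport fun x => g x * f x := by
    simpa [mul_comm] using hsupp
  -- compact supports of the two integrands
  have hA : HasCompactSupport fun x => f x * tangDeriv a α g x :=
    HasCompactSupport.intro hsupp fun x hx =>
      mul_tangDeriv_eq_zero_of_nmem_tsupport a α f g hf.continuous x hx
  have hB : HasCompactSupport fun x => tangDeriv a α f x * g x := by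
    have : HasCompactSupport fun x => g x * tangDeriv a α f x :=
      HasCompactSupport.intro hsupp' fun x hx =>
        mul_tangDeriv_eq_zero_of_nmem_tsupport a α g f hg.continuous x hx
    simpa [mul_comm] using this
  have hAc : Continuous fun x => f x * tangDeriv a α g x :=
    hf.continuous.mul (continuous_tangDeriv a ha α g hg)
  have hBc : Continuous fun x => tangDeriv a α f x * g x :=
    (continuous_tangDeriv a ha α f hf).mul hg.continuous
  have hAi : Integrable fun x => f x * tangDeriv a α g x :=
    hAc.integrable_of_hasCompactSupport hA
  have hBi : Integrable fun x => tangDeriv a α f x * g x :=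
    hBc.integrable_of_hasCompactSupport hB
  -- product rule
  have key : ∀ x, tangDeriv a α (fun x => f x * g x) x
      = f x * tangDeriv a α g x + tangDeriv a α f x * g x := by
    intro x
    have hfx : DifferentiableAt ℝ f x := hf.differentiable one_ne_zero x
    have hgx : DifferentiableAt ℝ g x := hg.differentiable one_ne_zero x
    simp only [tangDeriv, fderiv_fun_mul hfx hgx, ContinuousLinearMap.add_apply,
      ContinuousLinearMap.smul_apply, smul_eq_mul]
    ring
  have hzero : (∫ x, f x * tangDeriv a α g x) + ∫ x, tangDeriv a α f x * g x = 0 := by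
    rw [← integral_add hAi hBi]
    rw [show (fun x => f x * tangDeriv a α g x + tangDeriv a α f x * g x)
        = tangDeriv a α (fun x => f x * g x) from funext fun x => (key x).symm]
    exact integral_tangDeriv_eq_zero a ha α _ (hf.mul hg) hsupp
  linarith
end
end
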